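/- Let n ≥ 1 and let d_1, …, d_K be positive integers with each d_j ≤ n; set h_j = Σ_{i<j} d_i (so h_1 = 0) and D = Σ_{j=1}^{K} d_j. For each agent x ∈ {1, …, n}, the number of indices j ∈ {1, …, K} satisfying the designation test (x − 1 − h_j) mod n < d_j lies between ⌊D/n⌋ and ⌈D/n⌉; in particular, the counts for any two agents differ by at most 1. -/

import Mathlib

namespace NDCA

/-- `t` is an increment array (IA) of size `s` for `n` agents:
a tuple of non-negative integers of length `s` with sum `n - s`. -/
def IsIA (n s : ℕ) (t : List ℕ) : Prop :=
  t.length = s ∧ t.sum = n - s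

/-- Cumulative increment `φ_i` (1-indexed): `φ_1 = 0`, and
`φ_i = Σ_{k=0}^{i-2} (t_k + 1)` for `2 ≤ i`. -/
def phi (t : List ℕ) (i : ℕ) : ℕ := (t.take (i - 1)).sum + (i - 1)

/-- The coalition generated by increment array `t` from starting agent `x`:
`C(x,t) = { ((x - 1 + φ_i) mod n) + 1 : 1 ≤ i ≤ s }`. -/
def coal (n x : ℕ) (t : List ℕ) : Finset ℕ :=
  (Finset.Icc 1 t.length).image (fun i => (x - 1 + phi t i) % n + 1)

/-- The collection of coalitions generated by `t` as the starting agent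
ranges over `{1, …, n}`. -/
def gen (n : ℕ) (t : List ℕ) : Finset (Finset ℕ) :=
  (Finset.Icc 1 n).image (fun x => coal n x t)

/-- `u` is a circular shift of `t`: `u = ⟨t_k, …, t_{s-1}, t_0, …, t_{k-1}⟩`
for some `0 ≤ k ≤ s - 1`. -/
def ShiftEquiv (t u : List ℕ) : Prop :=
  ∃ k, k < t.length ∧ u = t.rotate k

/-- `p` is a period of `t`: `1 ≤ p`, `p ∣ |t|`, and `t` consists of
`|t|/p` identical copies of its first `p` entries. -/
def IsPeriodOf (t : List ℕ) (p : ℕ) : Prop :=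
  1 ≤ p ∧ p ∣ t.length ∧ t = (List.replicate (t.length / p) (t.take p)).flatten

/-- The period `π(t)`: the smallest `p` that is a period of `t`. -/
noncomputable def period (t : List ℕ) : ℕ := sInf {p | IsPeriodOf t p}

/-- The number of indices `j ∈ {1,…,K}` for which agent `x` passes the
designation test `(x - 1 - h_j) mod n < d_j`, with `h_j = Σ_{i<j} d_i`. -/
def desigCount14 (n K : ℕ) (d : ℕ → ℕ) (x : ℕ) : ℕ :=
  ((Finset.Icc 1 K).filter (fun j =>
    ((x : ℤ) - 1 - (∑ i ∈ Finset.Ico 1 j, (d i : ℤ))) % (n : ℤ)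
      < (d j : ℤ))).card


-- window counting lemma
lemma aux_window_card (n : ℕ) (hn : 0 < n) (a : ℕ) (ha : a < n) (H e : ℕ) (he : e ≤ n) :
    ((Finset.Ico H (H + e)).filter (fun m => m % n = a)).card
      = if ((a : ℤ) - H) % n < e then 1 else 0 := by
  have hnz : (n : ℤ) ≠ 0 := by exact_mod_cast hn.ne'
  set r : ℤ := ((a : ℤ) - H) % n with hr
  have hr0 : 0 ≤ r := Int.emod_nonneg _ hnz
  have hrn : r < n := Int.emod_lt_of_pos _ (by exact_mod_cast hn)
  set m0 : ℕ := H + r.toNat with hm0def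
  have hm0cast : (m0 : ℤ) = H + r := by
    rw [hm0def]; push_cast [Int.toNat_of_nonneg hr0]; ring
  have hm0 : m0 % n = a := by
    have key : ((H : ℤ) + ((a:ℤ) - H) % n) % n = (a:ℤ) % n := by
      conv_rhs => rw [show (a:ℤ) = H + ((a:ℤ) - H) by ring]
      rw [Int.add_emod (H:ℤ) (((a:ℤ)-H)), Int.add_emod (H:ℤ) (((a:ℤ)-H)%n),
        Int.emod_emod_of_dvd _ dvd_rfl]
    have h2 : (m0 : ℤ) % n = a := by
      rw [hm0cast, hr, key, Int.emod_eq_of_lt (by positivity) (by exact_mod_cast ha)]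
    have h3 : ((m0 % n : ℕ) : ℤ) = (a : ℕ) := by push_cast; exact h2
    exact_mod_cast h3
  have hm0lt : m0 < H + n := by omega
  have huniq : ∀ m, H ≤ m → m < H + n → m % n = a → m = m0 := by
    intro m h1 h2 h3
    have e1 : n * (m / n) + a = m := by rw [← h3]; exact Nat.div_add_mod m n
    have e2 : n * (m0 / n) + a = m0 := by rw [← hm0]; exact Nat.div_add_mod m0 n
    rcases lt_trichotomy (m / n) (m0 / n) with h | h | h
    · have hmul : n * (m / n + 1) ≤ n * (m0 / n) := Nat.mul_le_mul_left n h
      rw [Nat.mul_succ] at hmul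
      exfalso; linarith
    · rw [h] at e1; linarith
    · have hmul : n * (m0 / n + 1) ≤ n * (m / n) := Nat.mul_le_mul_left n h
      rw [Nat.mul_succ] at hmul
      exfalso; linarith
  by_cases hcase : r < e
  · rw [if_pos hcase]
    have hset : (Finset.Ico H (H+e)).filter (fun m => m % n = a) = {m0} := by
      ext m
      simp only [Finset.mem_filter, Finset.mem_Ico, Finset.mem_singleton]
      constructor
      · rintro ⟨⟨h1, h2⟩, h3⟩
        exact huniq m h1 (by omega) h3
      · rintro rfl
        exact ⟨⟨by omega, by omega⟩, hm0⟩
    rw [hset, Finset.card_singleton]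
  · rw [if_neg hcase]
    rw [Finset.card_eq_zero, Finset.filter_eq_empty_iff]
    intro m hm
    simp only [Finset.mem_Ico] at hm
    intro h3
    have := huniq m hm.1 (by omega) h3
    omega


lemma aux_count_split (n a H e : ℕ) :
    ((Finset.range (H + e)).filter (fun m => m % n = a)).card
      = ((Finset.range H).filter (fun m => m % n = a)).card
        + ((Finset.Ico H (H + e)).filter (fun m => m % n = a)).card := by
  rw [Finset.range_eq_Ico, Finset.range_eq_Ico,
    ← Finset.Ico_union_Ico_eq_Ico (Nat.zero_le H) (Nat.le_add_right H e),
    Finset.filter_union]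
  exact Finset.card_union_of_disjoint
    (Finset.disjoint_filter_filter (p := fun m => m % n = a) (q := fun m => m % n = a) (Finset.Ico_disjoint_Ico_consecutive 0 H (H+e)))

lemma aux_count_closed (n : ℕ) (hn : 0 < n) (a : ℕ) (ha : a < n) (D : ℕ) :
    ((Finset.range D).filter (fun m => m % n = a)).card = (D + (n - 1 - a)) / n := by
  induction D with
  | zero => simp [Nat.div_eq_of_lt (show n - 1 - a < n by omega)]
  | succ D ih =>
    rw [Finset.range_add_one, Finset.filter_insert]
    have hdvd : n ∣ D + (n - 1 - a) + 1 ↔ D % n = a := by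
      have hcast : ((D + (n - 1 - a) + 1 : ℕ) : ℤ) = (n : ℤ) * 1 + ((D:ℤ) - a) := by
        push_cast; omega
      rw [← Int.natCast_dvd_natCast, hcast]
      rw [Int.dvd_add_right (dvd_mul_right (n:ℤ) 1)]
      constructor
      · intro h
        have := Int.emod_emod_of_dvd (D : ℤ) (dvd_refl (n:ℤ))
        have h2 : (D : ℤ) % n = (a : ℤ) % n :=
          Int.emod_eq_emod_iff_emod_sub_eq_zero.mpr (Int.emod_eq_zero_of_dvd h)
        have h3 : (a : ℤ) % n = a := Int.emod_eq_of_lt (by positivity) (by exact_mod_cast ha)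
        have h4 : ((D % n : ℕ) : ℤ) = (a : ℕ) := by push_cast; rw [h2, h3]
        exact_mod_cast h4
      · intro h
        have h4 : ((D % n : ℕ) : ℤ) = (D : ℤ) % n := by push_cast; ring
        have h2 : (D : ℤ) % n = a := by rw [← h4, h]
        have : (n:ℤ) ∣ (D:ℤ) - (D:ℤ) % n := Int.dvd_self_sub_of_emod_eq rfl
        rw [h2] at this; exact this
    have hsucc : (D + 1 + (n - 1 - a)) / n = (D + (n - 1 - a)) / n
        + if n ∣ D + (n - 1 - a) + 1 then 1 else 0 := by
      rw [show D + 1 + (n - 1 - a) = (D + (n - 1 - a)) + 1 by omega, Nat.succ_div]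
    rw [hsucc]
    by_cases h : D % n = a
    · rw [if_pos h, Finset.card_insert_of_notMem (by simp), ih, if_pos (hdvd.mpr h)]
    · rw [if_neg h, ih, if_neg (fun hc => h (hdvd.mp hc))]
      omega

lemma aux_desig_eq (n K : ℕ) (hn : 1 ≤ n) (d : ℕ → ℕ)
    (hd : ∀ j, 1 ≤ j → j ≤ K → 1 ≤ d j ∧ d j ≤ n)
    (x : ℕ) (hx1 : 1 ≤ x) (hx2 : x ≤ n) :
    desigCount14 n K d x
      = ((∑ j ∈ Finset.Icc 1 K, d j) + (n - 1 - (x - 1))) / n := by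
  have ha : x - 1 < n := by omega
  rw [← aux_count_closed n hn (x-1) ha]
  induction K with
  | zero =>
    simp [desigCount14]
  | succ K ih =>
    have hd' : ∀ j, 1 ≤ j → j ≤ K → 1 ≤ d j ∧ d j ≤ n := fun j h1 h2 => hd j h1 (by omega)
    have hins : Finset.Icc 1 (K+1) = insert (K+1) (Finset.Icc 1 K) := by
      ext m; simp [Finset.mem_Icc]; omega
    have hsum : ∑ j ∈ Finset.Icc 1 (K+1), d j = (∑ j ∈ Finset.Icc 1 K, d j) + d (K+1) := by
      rw [hins, Finset.sum_insert (by simp)]; ring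
    rw [hsum, aux_count_split]
    rw [aux_window_card n hn (x-1) ha _ _ (hd (K+1) (by omega) le_rfl).2]
    rw [desigCount14, hins, Finset.filter_insert]
    have hIco : Finset.Ico 1 (K+1) = Finset.Icc 1 K := rfl
    have hcasts : ((x : ℤ) - 1 - (∑ i ∈ Finset.Ico 1 (K+1), (d i : ℤ)))
        = ((x - 1 : ℕ) : ℤ) - ((∑ j ∈ Finset.Icc 1 K, d j : ℕ) : ℤ) := by
      rw [hIco]; push_cast; omega
    by_cases ht : ((x : ℤ) - 1 - (∑ i ∈ Finset.Ico 1 (K+1), (d i : ℤ))) % (n : ℤ) < (d (K+1) : ℤ)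
    · rw [if_pos ht, Finset.card_insert_of_notMem (by simp), ← desigCount14, ih hd',
        if_pos (by rw [← hcasts]; exact ht)]
    · rw [if_neg ht, ← desigCount14, ih hd', if_neg (by rw [← hcasts]; exact ht)]
      omega

/-- Let `n ≥ 1` and positive window lengths
`d_1, …, d_K ≤ n` with cumulative offsets `h_j = Σ_{i<j} d_i` and total
`D = Σ_j d_j`.  For each agent `x ∈ {1,…,n}` the number of indices `j`
satisfying the designation test `(x - 1 - h_j) mod n < d_j` lies between
`⌊D/n⌋` and `⌈D/n⌉`; in particular, the counts of any two agents differ by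
at most 1. -/
theorem stmt14 (n K : ℕ) (hn : 1 ≤ n) (d : ℕ → ℕ)
    (hd : ∀ j, 1 ≤ j → j ≤ K → 1 ≤ d j ∧ d j ≤ n)
    (x : ℕ) (hx : x ∈ Finset.Icc 1 n) :
    (∑ j ∈ Finset.Icc 1 K, d j) / n ≤ desigCount14 n K d x ∧
    desigCount14 n K d x ≤ ((∑ j ∈ Finset.Icc 1 K, d j) + n - 1) / n ∧
    ∀ y ∈ Finset.Icc 1 n,
      desigCount14 n K d x ≤ desigCount14 n K d y + 1 := by
  simp only [Finset.mem_Icc] at hx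
  set D := ∑ j ∈ Finset.Icc 1 K, d j with hD
  have key : ∀ z, 1 ≤ z → z ≤ n →
      D / n ≤ desigCount14 n K d z ∧ desigCount14 n K d z ≤ (D + n - 1) / n := by
    intro z hz1 hz2
    rw [aux_desig_eq n K hn d hd z hz1 hz2, ← hD]
    constructor
    · exact Nat.div_le_div_right (by omega)
    · exact Nat.div_le_div_right (by omega)
  obtain ⟨hl, hu⟩ := key x hx.1 hx.2
  refine ⟨hl, hu, ?_⟩
  intro y hy
  simp only [Finset.mem_Icc] at hy
  obtain ⟨hl', _⟩ := key y hy.1 hy.2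
  have step : (D + n - 1) / n ≤ D / n + 1 := by
    calc (D + n - 1) / n ≤ (D + n) / n := Nat.div_le_div_right (by omega)
    _ = D / n + 1 := Nat.add_div_right D hn
  omega

end NDCA
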